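/- Let R > 0. Any horizontal segment in ℍ^n contained in the Euclidean ball B_E(0,R) ⊂ ℝ^{2n+1} forms an angle with the xy-hyperplane {t = 0} which is at most arccos(1/√(1+4R²)). -/

import Mathlib

open MeasureTheory Set
open scoped ENNReal NNReal RealInnerProductSpace

noncomputable section

/-- Points of the Heisenberg group `ℍⁿ`, i.e. `ℝ^(2n+1)` with its Euclidean structure. -/
abbrev HeisPt (n : ℕ) := EuclideanSpace ℝ (Fin (2*n+1))

/-- Index of the `i`-th `x`-coordinate. -/
def xIdx (n : ℕ) (i : Fin n) : Fin (2*n+1) := ⟨i.1, by have := i.2; omega⟩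
/-- Index of the `i`-th `y`-coordinate. -/
def yIdx (n : ℕ) (i : Fin n) : Fin (2*n+1) := ⟨n + i.1, by have := i.2; omega⟩
/-- Index of the `t`-coordinate. -/
def tIdx (n : ℕ) : Fin (2*n+1) := ⟨2*n, by omega⟩

/-- The Heisenberg group law
`(x,y,t)*(x',y',t') = (x+x', y+y', t+t'+2(⟨y,x'⟩−⟨x,y'⟩))`. -/
def heisMul {n : ℕ} (p q : HeisPt n) : HeisPt n := WithLp.toLp 2 (fun j =>
  if j = tIdx n then
    p j + q j + 2 * ((∑ i : Fin n, p (yIdx n i) * q (xIdx n i))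
      - ∑ i : Fin n, p (xIdx n i) * q (yIdx n i))
  else p j + q j)

/-- The Heisenberg group inverse: `(x,y,t)⁻¹ = (−x,−y,−t)`. -/
def heisInv {n : ℕ} (p : HeisPt n) : HeisPt n := WithLp.toLp 2 (fun j => -(p j))

/-- The Korányi (homogeneous) norm `‖(x,y,t)‖_H = ((‖x‖²+‖y‖²)²+t²)^(1/4)`. -/
def korNorm {n : ℕ} (p : HeisPt n) : ℝ :=
  (((∑ i : Fin n, p (xIdx n i) ^ 2) + ∑ i : Fin n, p (yIdx n i) ^ 2) ^ 2
    + p (tIdx n) ^ 2) ^ ((1:ℝ)/4)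

/-- The Heisenberg (Korányi) metric `d_H(p,q) = ‖q⁻¹*p‖_H`. -/
def heisDist {n : ℕ} (p q : HeisPt n) : ℝ := korNorm (heisMul (heisInv q) p)

/-- The Heisenberg ball `B_H(p,r)`. -/
def heisBall {n : ℕ} (p : HeisPt n) (r : ℝ) : Set (HeisPt n) := {q | heisDist p q < r}

/-- Orthogonal projection onto the `xy`-hyperplane `{t = 0}`. -/
def projXY {n : ℕ} (v : HeisPt n) : HeisPt n := WithLp.toLp 2 (fun j => if j = tIdx n then 0 else v j)

lemma sum_split (n : ℕ) (f : Fin (2*n+1) → ℝ) :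
    ∑ j, f j = (∑ i : Fin n, f (xIdx n i)) + (∑ i : Fin n, f (yIdx n i)) + f (tIdx n) := by
  have h : 2*n+1 = n + (n+1) := by omega
  rw [Fintype.sum_equiv (finCongr h) f (fun j => f ((finCongr h).symm j)) (by intro x; simp)]
  rw [Fin.sum_univ_add, Fin.sum_univ_castSucc]
  have hx : ∀ i : Fin n, (finCongr h).symm (Fin.castAdd (n+1) i) = xIdx n i := by
    intro i; apply Fin.ext; simp [xIdx]
  have hy : ∀ i : Fin n, (finCongr h).symm (Fin.natAdd n i.castSucc) = yIdx n i := by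
    intro i; apply Fin.ext; simp [yIdx]
  have ht : (finCongr h).symm (Fin.natAdd n (Fin.last n)) = tIdx n := by
    apply Fin.ext; simp [tIdx]; omega
  simp only [hx, hy, ht]
  ring

lemma xIdx_ne_t (n : ℕ) (i : Fin n) : xIdx n i ≠ tIdx n := by
  have := i.2; simp [xIdx, tIdx, Fin.ext_iff]; omega

lemma yIdx_ne_t (n : ℕ) (i : Fin n) : yIdx n i ≠ tIdx n := by
  have := i.2; simp [yIdx, tIdx, Fin.ext_iff]; omega

theorem horizontal_segment_angle_bound
    (n : ℕ) (R : ℝ) (hR : 0 < R) (e : HeisPt n) (he0 : e (tIdx n) = 0) (he : ‖e‖ = 1)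
    (p : HeisPt n) (s₁ s₂ : ℝ) (hs : s₁ < s₂)
    (hsub : ∀ s ∈ Icc s₁ s₂, heisMul p (s • e) ∈ Metric.ball (0 : HeisPt n) R) :
    InnerProductGeometry.angle (heisMul p e - p) (projXY (heisMul p e - p))
      ≤ Real.arccos (1 / Real.sqrt (1 + 4*R^2)) := by
  classical
  set c : ℝ := 2 * ((∑ i : Fin n, p (yIdx n i) * e (xIdx n i))
      - ∑ i : Fin n, p (xIdx n i) * e (yIdx n i)) with hc
  set v : HeisPt n := heisMul p e - p with hvdef
  have hv : ∀ j, v j = if j = tIdx n then c else e j := by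
    intro j
    by_cases hj : j = tIdx n
    · subst hj; simp [hvdef, heisMul, he0, PiLp.sub_apply, hc]
    · simp [hvdef, heisMul, hj, PiLp.sub_apply]
  -- the squared norm of e
  have h1 : (∑ i : Fin n, e (xIdx n i) ^ 2) + ∑ i : Fin n, e (yIdx n i) ^ 2 = 1 := by
    have hs1 : ∑ j, (e j) ^ 2 = 1 := by
      have h2 : ‖e‖ ^ 2 = ∑ j, ‖e j‖ ^ 2 := by
        rw [EuclideanSpace.norm_eq, Real.sq_sqrt (by positivity)]
      simp only [Real.norm_eq_abs, sq_abs] at h2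
      rw [← h2, he]; norm_num
    rw [sum_split n (fun j => (e j)^2), he0] at hs1
    simpa using hs1
  -- norm of v
  have hvnorm : ‖v‖ = Real.sqrt (1 + c ^ 2) := by
    rw [EuclideanSpace.norm_eq]
    congr 1
    simp only [Real.norm_eq_abs, sq_abs]
    rw [sum_split n (fun j => (v j)^2)]
    have hvx : ∀ i : Fin n, v (xIdx n i) = e (xIdx n i) := by
      intro i; rw [hv]; simp [xIdx_ne_t]
    have hvy : ∀ i : Fin n, v (yIdx n i) = e (yIdx n i) := by
      intro i; rw [hv]; simp [yIdx_ne_t]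
    have hvt : v (tIdx n) = c := by rw [hv]; simp
    simp only [hvx, hvy, hvt]
    linarith [h1]
  -- inner product of v and e
  have hinner : ⟪v, e⟫ = 1 := by
    rw [PiLp.inner_apply]
    simp only [RCLike.inner_apply, starRingEnd_apply, star_trivial]
    rw [sum_split n (fun j => e j * v j)]
    have hvx : ∀ i : Fin n, v (xIdx n i) = e (xIdx n i) := by
      intro i; rw [hv]; simp [xIdx_ne_t]
    have hvy : ∀ i : Fin n, v (yIdx n i) = e (yIdx n i) := by
      intro i; rw [hv]; simp [yIdx_ne_t]
    simp only [hvx, hvy, he0, zero_mul, add_zero, ← sq]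
    exact h1
  -- projection is e
  have hproj : projXY v = e := by
    ext j
    by_cases hj : j = tIdx n
    · subst hj; simp [projXY, he0]
    · simp [projXY, hj, hv j]
  -- bound on c
  have hcbound : c ^ 2 ≤ 4 * R ^ 2 := by
    have hq := hsub s₁ ⟨le_refl _, le_of_lt hs⟩
    set q : HeisPt n := heisMul p (s₁ • e) with hqdef
    have hqnorm : ‖q‖ < R := by
      rw [Metric.mem_ball, dist_zero_right] at hq; exact hq
    have hqx : ∀ i : Fin n, q (xIdx n i) = p (xIdx n i) + s₁ * e (xIdx n i) := by
      intro i; simp [hqdef, heisMul, xIdx_ne_t n i, PiLp.smul_apply, smul_eq_mul]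
    have hqy : ∀ i : Fin n, q (yIdx n i) = p (yIdx n i) + s₁ * e (yIdx n i) := by
      intro i; simp [hqdef, heisMul, yIdx_ne_t n i, PiLp.smul_apply, smul_eq_mul]
    have key : (∑ i : Fin n, q (yIdx n i) * e (xIdx n i))
        - ∑ i : Fin n, q (xIdx n i) * e (yIdx n i) = c / 2 := by
      simp only [hqx, hqy, add_mul]
      rw [Finset.sum_add_distrib, Finset.sum_add_distrib]
      have heq : ∑ i : Fin n, s₁ * e (yIdx n i) * e (xIdx n i)
          = ∑ i : Fin n, s₁ * e (xIdx n i) * e (yIdx n i) := by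
        apply Finset.sum_congr rfl; intro i _; ring
      rw [heq, hc]; ring
    -- Cauchy-Schwarz over Fin n ⊕ Fin n
    have CS := Finset.sum_mul_sq_le_sq_mul_sq (Finset.univ : Finset (Fin n ⊕ Fin n))
      (fun j => Sum.elim (fun i => q (xIdx n i)) (fun i => q (yIdx n i)) j)
      (fun j => Sum.elim (fun i => -(e (yIdx n i))) (fun i => e (xIdx n i)) j)
    rw [Fintype.sum_sum_type, Fintype.sum_sum_type, Fintype.sum_sum_type] at CS
    simp only [Sum.elim_inl, Sum.elim_inr] at CS
    have e1 : (∑ i : Fin n, q (xIdx n i) * -(e (yIdx n i)))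
        + ∑ i : Fin n, q (yIdx n i) * e (xIdx n i) = c / 2 := by
      rw [← key]; simp [mul_neg, Finset.sum_neg_distrib]; ring
    have e2 : (∑ i : Fin n, (-(e (yIdx n i))) ^ 2) + ∑ i : Fin n, e (xIdx n i) ^ 2 = 1 := by
      simp only [neg_sq]; linarith [h1]
    rw [e1, e2, mul_one] at CS
    -- sum of squares of q's xy part is at most ‖q‖²
    have hqsq : (∑ i : Fin n, q (xIdx n i) ^ 2) + ∑ i : Fin n, q (yIdx n i) ^ 2 ≤ ‖q‖ ^ 2 := by
      have h2 : ‖q‖ ^ 2 = ∑ j, (q j) ^ 2 := by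
        rw [EuclideanSpace.norm_eq, Real.sq_sqrt (by positivity)]
        simp [Real.norm_eq_abs, sq_abs]
      rw [h2, sum_split n (fun j => (q j)^2)]
      nlinarith [sq_nonneg (q (tIdx n))]
    have hqR : ‖q‖ ^ 2 < R ^ 2 := by
      nlinarith [norm_nonneg q]
    nlinarith
  -- finish
  rw [hproj]
  have hangle : InnerProductGeometry.angle v e
      = Real.arccos (1 / Real.sqrt (1 + c ^ 2)) := by
    rw [InnerProductGeometry.angle, hinner, hvnorm, he, mul_one]
  rw [hangle]
  have hc1 : (0:ℝ) < Real.sqrt (1 + c ^ 2) := Real.sqrt_pos.2 (by positivity)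
  have hR1 : (0:ℝ) < Real.sqrt (1 + 4 * R ^ 2) := Real.sqrt_pos.2 (by positivity)
  have hmono : 1 / Real.sqrt (1 + 4 * R ^ 2) ≤ 1 / Real.sqrt (1 + c ^ 2) := by
    apply one_div_le_one_div_of_le hc1
    apply Real.sqrt_le_sqrt
    linarith
  rw [Real.arccos, Real.arccos]
  have := Real.monotone_arcsin hmono
  linarith
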